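/- arXiv:2307.08212 — 2 statements merged into one kernel-verified Lean document; each statement's English description precedes it below -/
import Mathlib

section
/- Consider list colorings on a finite simple graph G = (V,E) of maximum degree Δ ≥ 3, where each vertex v has a color list L_v with deg_G(v) + 2 ≤ |L_v| ≤ q. For every pinning η on Λ ⊆ V, every vertex v ∈ V∖Λ, and every color c ∈ L_v such that η extends to a full list coloring assigning color c to v, the conditional marginal probability satisfies μ^η_v(c) ≥ 1/(2^Δ q). -/
open scoped BigOperators Classical

noncomputable section

/-- Expectation of `f` under the (finitely supported) density `p`. -/
def pmean {α : Type*} [Fintype α] (p f : α → ℝ) : ℝ := ∑ a, p a * f a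

/-- Variance of `f` under the density `p`. -/
def pvar {α : Type*} [Fintype α] (p f : α → ℝ) : ℝ :=
  pmean p (fun a => (f a - pmean p f) ^ 2)

variable {V : Type*} [Fintype V] [DecidableEq V] {C : Type*} [Fintype C] [DecidableEq C]

/-- The degree of `v` in `G`. -/
def gdeg (G : SimpleGraph V) (v : V) : ℕ :=
  (Finset.univ.filter (fun u => G.Adj v u)).card

/-- `σ` is a proper list coloring: each vertex gets a color from its own list and
adjacent vertices get distinct colors. -/
def isListColoring (G : SimpleGraph V) (L : V → Finset C) (σ : V → C) : Prop :=
  (∀ v, σ v ∈ L v) ∧ ∀ u v, G.Adj u v → σ u ≠ σ v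

/-- The uniform distribution over the proper list colorings of `G`. -/
def colMu (G : SimpleGraph V) (L : V → Finset C) : (V → C) → ℝ :=
  fun σ => (if isListColoring G L σ then 1 else 0) /
    ((Finset.univ.filter (fun τ : V → C => isListColoring G L τ)).card : ℝ)

/-- The conditional density of `μ` given that the configuration agrees with `σ`
outside the (free) set `B`. -/
def condD (μ : (V → C) → ℝ) (B : Finset V) (σ : V → C) : (V → C) → ℝ :=
  fun τ => if ∀ v, v ∉ B → τ v = σ v
    then μ τ / ∑ τ' ∈ Finset.univ.filter (fun τ' : V → C => ∀ v, v ∉ B → τ' v = σ v), μ τ'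
    else 0


lemma greedy_recolor (G : SimpleGraph V) (L : V → Finset C)
    (hL : ∀ u, gdeg G u + 2 ≤ (L u).card) :
    ∀ S : Finset V, ∀ σ : V → C, (∀ u, σ u ∈ L u) →
      (∀ a b, G.Adj a b → a ∉ S → b ∉ S → σ a ≠ σ b) →
      ∃ τ : V → C, isListColoring G L τ ∧ ∀ u, u ∉ S → τ u = σ u := by
  intro S
  induction S using Finset.strongInduction with
  | _ S ih =>
    intro σ hmem hprop
    rcases S.eq_empty_or_nonempty with rfl | ⟨u, hu⟩
    · exact ⟨σ, ⟨hmem, fun a b hab => hprop a b hab (by simp) (by simp)⟩, fun _ _ => rfl⟩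
    · set F := (Finset.univ.filter (fun w => G.Adj u w)).image σ with hF
      have hFcard : F.card ≤ gdeg G u := Finset.card_image_le
      have hne : (L u \ F).Nonempty := by
        rw [Finset.sdiff_nonempty]
        intro hsub
        have h2 := Finset.card_le_card hsub
        have := hL u
        omega
      obtain ⟨d, hd⟩ := hne
      rw [Finset.mem_sdiff] at hd
      obtain ⟨τ, hτ, hag⟩ := ih (S.erase u) (Finset.erase_ssubset hu)
        (Function.update σ u d)
        (fun w => by
          rcases eq_or_ne w u with rfl | hw
          · simpa using hd.1
          · rw [Function.update_of_ne hw]; exact hmem w)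
        (fun a b hab ha hb => by
          rcases eq_or_ne a u with rfl | hau
          · have hbu : b ≠ a := (G.ne_of_adj hab).symm
            rw [Function.update_self, Function.update_of_ne hbu]
            intro h
            exact hd.2 (by rw [hF, h]; exact Finset.mem_image_of_mem σ (by simp [hab]))
          · rcases eq_or_ne b u with rfl | hbu
            · rw [Function.update_self, Function.update_of_ne hau]
              intro h
              exact hd.2 (by rw [hF, ← h]; exact Finset.mem_image_of_mem σ (by simp [hab.symm]))
            · rw [Function.update_of_ne hau, Function.update_of_ne hbu]
              exact hprop a b hab (by simp [Finset.mem_erase, hau] at ha; exact ha)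
                (by simp [Finset.mem_erase, hbu] at hb; exact hb))
      refine ⟨τ, hτ, fun w hw => ?_⟩
      rw [hag w (fun h => hw (Finset.mem_of_mem_erase h)),
        Function.update_of_ne (fun h : w = u => hw (h ▸ hu))]

lemma exists_recolor (G : SimpleGraph V) (L : V → Finset C)
    (hL : ∀ u, gdeg G u + 2 ≤ (L u).card) (v : V) (c : C) (hc : c ∈ L v)
    (σ : V → C) (hσ : isListColoring G L σ) :
    ∃ τ : V → C, isListColoring G L τ ∧ τ v = c ∧
      ∀ u, u ≠ v → ¬(G.Adj v u ∧ σ u = c) → τ u = σ u := by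
  set S : Finset V := Finset.univ.filter (fun u => G.Adj v u ∧ σ u = c) with hS
  have hvS : v ∉ S := by simp [hS]
  obtain ⟨τ, hτ, hag⟩ := greedy_recolor G L hL S (Function.update σ v c)
    (fun w => by
      rcases eq_or_ne w v with rfl | hw
      · simpa using hc
      · rw [Function.update_of_ne hw]; exact hσ.1 w)
    (fun a b hab ha hb => by
      rcases eq_or_ne a v with rfl | hav
      · have hbv : b ≠ a := (G.ne_of_adj hab).symm
        rw [Function.update_self, Function.update_of_ne hbv]
        intro h
        exact hb (by simp [hS, hab, h.symm])
      · rcases eq_or_ne b v with rfl | hbv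
        · rw [Function.update_self, Function.update_of_ne hav]
          intro h
          exact ha (by simp [hS, hab.symm, h])
        · rw [Function.update_of_ne hav, Function.update_of_ne hbv]
          exact hσ.2 a b hab)
  refine ⟨τ, hτ, ?_, fun u huv hu => ?_⟩
  · rw [hag v hvS, Function.update_self]
  · rw [hag u (by simp [hS]; tauto), Function.update_of_ne huv]

lemma card_count (G : SimpleGraph V) (L : V → Finset C) (Δ q : ℕ)
    (hdeg : ∀ v, gdeg G v ≤ Δ)
    (hL : ∀ v, gdeg G v + 2 ≤ (L v).card ∧ (L v).card ≤ q)
    (Λ : Finset V) (η : V → C)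
    (v : V) (hv : v ∉ Λ) (c : C) (hc : c ∈ L v)
    (hnbr : ∀ u ∈ Λ, G.Adj v u → η u ≠ c) :
    (Finset.univ.filter (fun σ : V → C => isListColoring G L σ ∧ ∀ u ∈ Λ, σ u = η u)).card ≤
      2 ^ Δ * q * ((Finset.univ.filter (fun σ : V → C =>
        (isListColoring G L σ ∧ ∀ u ∈ Λ, σ u = η u) ∧ σ v = c)).card) := by
  classical
  set A := Finset.univ.filter (fun σ : V → C => isListColoring G L σ ∧ ∀ u ∈ Λ, σ u = η u) with hA
  set Ac := Finset.univ.filter (fun σ : V → C =>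
    (isListColoring G L σ ∧ ∀ u ∈ Λ, σ u = η u) ∧ σ v = c) with hAc
  have hL1 : ∀ u, gdeg G u + 2 ≤ (L u).card := fun u => (hL u).1
  set f : (V → C) → (V → C) := fun σ =>
    if h : isListColoring G L σ then (exists_recolor G L hL1 v c hc σ h).choose else σ with hf
  have hfspec : ∀ σ, isListColoring G L σ → isListColoring G L (f σ) ∧ f σ v = c ∧
      ∀ u, u ≠ v → ¬(G.Adj v u ∧ σ u = c) → f σ u = σ u := by
    intro σ h
    rw [hf]; simp only [dif_pos h]
    exact (exists_recolor G L hL1 v c hc σ h).choose_spec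
  have hmaps : ∀ σ ∈ A, f σ ∈ Ac := by
    intro σ hσ
    rw [hA, Finset.mem_filter] at hσ
    obtain ⟨hcol, hfc, hag⟩ := hfspec σ hσ.2.1
    rw [hAc, Finset.mem_filter]
    refine ⟨Finset.mem_univ _, ⟨hcol, fun u hu => ?_⟩, hfc⟩
    have huv : u ≠ v := fun h => hv (h ▸ hu)
    rw [hag u huv, hσ.2.2 u hu]
    rintro ⟨hadj, hcu⟩
    exact hnbr u hu hadj (by rw [← hσ.2.2 u hu]; exact hcu)
  refine (Finset.card_le_mul_card_image_of_maps_to hmaps (2 ^ Δ * q) ?_).trans (le_of_eq rfl)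
  intro τ hτ
  set nbrs := Finset.univ.filter (fun u => G.Adj v u) with hnbrs
  have hcardT : (nbrs.powerset ×ˢ L v).card ≤ 2 ^ Δ * q := by
    rw [Finset.card_product, Finset.card_powerset]
    have h1 : nbrs.card ≤ Δ := hdeg v
    exact Nat.mul_le_mul (Nat.pow_le_pow_right (by norm_num) h1) (hL v).2
  refine le_trans ?_ hcardT
  apply Finset.card_le_card_of_injOn
    (fun σ => (nbrs.filter (fun u => σ u = c), σ v))
  · intro σ hσ
    rw [Finset.mem_coe, Finset.mem_filter] at hσ
    have hσA := hσ.1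
    rw [hA, Finset.mem_filter] at hσA
    rw [Finset.mem_coe, Finset.mem_product]
    exact ⟨Finset.mem_powerset.2 (Finset.filter_subset _ _), hσA.2.1.1 v⟩
  · intro σ₁ h₁ σ₂ h₂ heq
    simp only [Finset.mem_coe, Finset.mem_filter] at h₁ h₂
    obtain ⟨hσ₁A, hf₁⟩ := h₁
    obtain ⟨hσ₂A, hf₂⟩ := h₂
    rw [hA, Finset.mem_filter] at hσ₁A hσ₂A
    have hag₁ := (hfspec σ₁ hσ₁A.2.1).2.2
    have hag₂ := (hfspec σ₂ hσ₂A.2.1).2.2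
    have heq1 : nbrs.filter (fun u => σ₁ u = c) = nbrs.filter (fun u => σ₂ u = c) :=
      congrArg Prod.fst heq
    have heq2 : σ₁ v = σ₂ v := congrArg Prod.snd heq
    funext u
    rcases eq_or_ne u v with rfl | huv
    · exact heq2
    · by_cases hadj : G.Adj v u
      · by_cases hc1 : σ₁ u = c
        · have hm : u ∈ nbrs.filter (fun u => σ₂ u = c) := by
            rw [← heq1, Finset.mem_filter]; exact ⟨by simp [hnbrs, hadj], hc1⟩
          rw [Finset.mem_filter] at hm
          rw [hc1, hm.2]
        · have hc2 : ¬ σ₂ u = c := by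
            intro h
            have hm : u ∈ nbrs.filter (fun u => σ₁ u = c) := by
              rw [heq1, Finset.mem_filter]; exact ⟨by simp [hnbrs, hadj], h⟩
            rw [Finset.mem_filter] at hm
            exact hc1 hm.2
          have e1 := hag₁ u huv (by tauto)
          have e2 := hag₂ u huv (by tauto)
          rw [← e1, ← e2, hf₁, hf₂]
      · have e1 := hag₁ u huv (by tauto)
        have e2 := hag₂ u huv (by tauto)
        rw [← e1, ← e2, hf₁, hf₂]


/-- **Marginal lower bound for list colorings.** If `Δ ≥ 3` bounds the maximum degree and
`deg(v) + 2 ≤ |L_v| ≤ q` for all `v`, then for any pinning `η` on `Λ`, any `v ∉ Λ` and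
any color `c ∈ L_v` such that `η` extends to a full list coloring assigning `c` to `v`,
the conditional marginal satisfies `μ^η_v(c) ≥ 1/(2^Δ q)`. -/
theorem list_coloring_marginal_lower_bound
    {V : Type*} [Fintype V] [DecidableEq V] {C : Type*} [Fintype C] [DecidableEq C]
    (G : SimpleGraph V) (L : V → Finset C) (Δ q : ℕ) (hΔ : 3 ≤ Δ)
    (hdeg : ∀ v, gdeg G v ≤ Δ)
    (hL : ∀ v, gdeg G v + 2 ≤ (L v).card ∧ (L v).card ≤ q)
    (Λ : Finset V) (η : V → C)
    (v : V) (hv : v ∉ Λ) (c : C) (hc : c ∈ L v)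
    (hfeas : ∃ σ : V → C, isListColoring G L σ ∧ (∀ u ∈ Λ, σ u = η u) ∧ σ v = c) :
    1 / ((2 : ℝ) ^ Δ * q) ≤
      ∑ τ ∈ Finset.univ.filter (fun τ : V → C => τ v = c),
        condD (colMu G L) Λᶜ η τ := by
  classical
  obtain ⟨σ₀, hσ₀col, hσ₀ag, hσ₀v⟩ := hfeas
  have hnbr : ∀ u ∈ Λ, G.Adj v u → η u ≠ c := by
    intro u hu hadj h
    exact hσ₀col.2 v u hadj (by rw [hσ₀v, hσ₀ag u hu, h])
  set A := Finset.univ.filter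
    (fun σ : V → C => isListColoring G L σ ∧ ∀ u ∈ Λ, σ u = η u) with hA
  set Ac := Finset.univ.filter (fun σ : V → C =>
    (isListColoring G L σ ∧ ∀ u ∈ Λ, σ u = η u) ∧ σ v = c) with hAc
  set N : ℝ := ((Finset.univ.filter (fun τ : V → C => isListColoring G L τ)).card : ℝ) with hN
  have hσ₀Ac : σ₀ ∈ Ac := by
    rw [hAc, Finset.mem_filter]; exact ⟨Finset.mem_univ _, ⟨hσ₀col, hσ₀ag⟩, hσ₀v⟩
  have hAcpos : 0 < Ac.card := Finset.card_pos.2 ⟨σ₀, hσ₀Ac⟩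
  have hσ₀A : σ₀ ∈ A := by
    rw [hA, Finset.mem_filter]; exact ⟨Finset.mem_univ _, hσ₀col, hσ₀ag⟩
  have hApos : 0 < A.card := Finset.card_pos.2 ⟨σ₀, hσ₀A⟩
  have hNpos : (0 : ℝ) < N := by
    rw [hN]
    exact_mod_cast Finset.card_pos.2 ⟨σ₀, by simp [hσ₀col]⟩
  have hNne : N ≠ 0 := ne_of_gt hNpos
  have hAne : (A.card : ℝ) ≠ 0 := by exact_mod_cast Nat.pos_iff_ne_zero.1 hApos
  have hD : (∑ τ' ∈ Finset.univ.filter (fun τ' : V → C => ∀ w, w ∉ Λᶜ → τ' w = η w),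
      colMu G L τ') = (A.card : ℝ) / N := by
    simp only [colMu, ← hN]
    rw [← Finset.sum_div, Finset.sum_boole]
    have hset : (Finset.univ.filter (fun τ' : V → C => ∀ w, w ∉ Λᶜ → τ' w = η w)).filter
        (fun τ => isListColoring G L τ) = A := by
      ext τ
      simp only [Finset.mem_filter, Finset.mem_univ, true_and, Finset.notMem_compl, hA]
      tauto
    rw [hset]
  have hsum : (∑ τ ∈ Finset.univ.filter (fun τ : V → C => τ v = c),
      condD (colMu G L) Λᶜ η τ) = (Ac.card : ℝ) / (A.card : ℝ) := by
    simp only [condD, hD]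
    rw [← Finset.sum_filter]
    simp only [colMu, ← hN]
    rw [← Finset.sum_div, ← Finset.sum_div, Finset.sum_boole]
    have hset : ((Finset.univ.filter (fun τ : V → C => τ v = c)).filter
        (fun τ => ∀ w, w ∉ Λᶜ → τ w = η w)).filter (fun τ => isListColoring G L τ) = Ac := by
      ext τ
      simp only [Finset.mem_filter, Finset.mem_univ, true_and, Finset.notMem_compl, hAc]
      tauto
    rw [hset]
    field_simp
  rw [hsum]
  have hq2 : 2 ≤ q := by have h1 := (hL v).1; have h2 := (hL v).2; omega
  have hpos : (0 : ℝ) < 2 ^ Δ * q := by positivity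
  rw [div_le_div_iff₀ hpos (by exact_mod_cast hApos)]
  have hcc := card_count G L Δ q hdeg hL Λ η v hv c hc hnbr
  rw [← hA, ← hAc] at hcc
  have hccR : (A.card : ℝ) ≤ (2:ℝ) ^ Δ * q * Ac.card := by exact_mod_cast hcc
  nlinarith


end
end

section
/- Consider list colorings on a finite simple graph G = (V,E) of maximum degree Δ ≥ 3, where each vertex v has a color list L_v with deg_G(v) + 2 ≤ |L_v| ≤ q. Let t ≥ 1 and let S ⊆ U ⊆ V with |S| ≤ t. Then for every pinning η on V∖U, the conditional distribution μ^η_U over list colorings of U satisfies {B_U(S,1), U∖S}-factorization of variance with constant C = 2(2^Δ q)^t; that is, for every real-valued function f of the coloring of U, Var_{μ^η_U} f ≤ 2(2^Δ q)^t · (E[Var_{B_U(S,1)} f] + E[Var_{U∖S} f]), where the conditional variances are taken under μ^η_U. -/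
open scoped BigOperators Classical

noncomputable section

variable {V : Type*} [Fintype V] [DecidableEq V] {C : Type*} [Fintype C] [DecidableEq C]

/-- `B_U(S, 1) = {v ∈ U : dist_G(v, S) ≤ 1}`. -/
def ballU1 {V : Type*} [Fintype V] [DecidableEq V] (G : SimpleGraph V)
    (U S : Finset V) : Finset V :=
  U.filter (fun v => ∃ s ∈ S, ∃ w : G.Walk v s, w.length ≤ 1)


set_option linter.unusedSectionVars false
set_option linter.unusedVariables false
set_option maxHeartbeats 2000000

section AbstractVariance

variable {α β γ : Type*} [Fintype α] [DecidableEq α] [DecidableEq β] [DecidableEq γ]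

/-- Average of `g` over the finite set `A`. -/
def pavg (A : Finset α) (g : α → ℝ) : ℝ := (∑ a ∈ A, g a) / A.card

/-- Variance of `g` over the finite set `A` (w.r.t. uniform measure). -/
def varOn (A : Finset α) (g : α → ℝ) : ℝ := pavg A (fun a => (g a - pavg A g)^2)

lemma pavg_nonneg {A : Finset α} {g : α → ℝ} (h : ∀ a ∈ A, 0 ≤ g a) : 0 ≤ pavg A g :=
  div_nonneg (Finset.sum_nonneg h) (Nat.cast_nonneg _)

lemma varOn_nonneg (A : Finset α) (g : α → ℝ) : 0 ≤ varOn A g :=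
  pavg_nonneg (fun a _ => sq_nonneg _)

lemma card_ne_zero_real {A : Finset α} (hA : A.Nonempty) : (A.card : ℝ) ≠ 0 := by
  have := Finset.card_pos.mpr hA
  positivity

lemma pavg_const_shift {A : Finset α} (hA : A.Nonempty) (g : α → ℝ) (c : ℝ) :
    pavg A (fun a => g a - c) = pavg A g - c := by
  have hc := card_ne_zero_real hA
  unfold pavg
  rw [Finset.sum_sub_distrib, Finset.sum_const, nsmul_eq_mul]
  field_simp

lemma varOn_const_shift {A : Finset α} (hA : A.Nonempty) (g : α → ℝ) (c : ℝ) :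
    varOn A (fun a => g a - c) = varOn A g := by
  unfold varOn
  rw [pavg_const_shift hA]
  congr 1; funext a; ring

lemma pavg_congr {A : Finset α} {g h : α → ℝ} (hgh : ∀ a ∈ A, g a = h a) :
    pavg A g = pavg A h := by
  unfold pavg; rw [Finset.sum_congr rfl hgh]

lemma sum_pavg_mul_card {A : Finset α} (g : α → ℝ) :
    (A.card : ℝ) * pavg A g = ∑ a ∈ A, g a := by
  rcases A.eq_empty_or_nonempty with rfl | hA
  · simp [pavg]
  · rw [pavg, mul_div_cancel₀ _ (card_ne_zero_real hA)]

lemma varOn_eq {A : Finset α} (hA : A.Nonempty) (g : α → ℝ) :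
    varOn A g = pavg A (fun a => g a ^ 2) - (pavg A g)^2 := by
  have hc := card_ne_zero_real hA
  set m := pavg A g with hm
  have hsum : ∑ a ∈ A, g a = (A.card : ℝ) * m := (sum_pavg_mul_card g).symm
  have hexp : ∑ a ∈ A, (g a - m)^2 = (∑ a ∈ A, g a ^ 2) - (A.card : ℝ) * m^2 := by
    have : ∀ a ∈ A, (g a - m)^2 = g a ^ 2 - 2*m*g a + m^2 := fun a _ => by ring
    rw [Finset.sum_congr rfl this, Finset.sum_add_distrib, Finset.sum_sub_distrib,
      Finset.sum_const, nsmul_eq_mul, ← Finset.mul_sum, hsum]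
    ring
  show (∑ a ∈ A, (g a - m)^2) / (A.card : ℝ) = (∑ a ∈ A, g a ^ 2) / A.card - m^2
  rw [hexp]
  field_simp

lemma mem_fib_self (Ω : Finset α) (π : α → β) {σ : α} (h : σ ∈ Ω) :
    σ ∈ Ω.filter (fun τ => π τ = π σ) := by
  simp [Finset.mem_filter, h]

lemma fib_eq_of_mem (Ω : Finset α) (π : α → β) {σ τ : α}
    (h : τ ∈ Ω.filter (fun ρ => π ρ = π σ)) :
    Ω.filter (fun ρ => π ρ = π τ) = Ω.filter (fun ρ => π ρ = π σ) := by
  rw [Finset.mem_filter] at h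
  apply Finset.filter_congr
  intro ρ _
  simp [h.2]

/-- Projection lemma: if `g` is constant on fibers of `π` within `Ω`, then
summing `g · (fiber-average of h)` equals summing `g · h`. -/
lemma sum_mul_pavg_fib (Ω : Finset α) (π : α → β) (g h : α → ℝ)
    (hg : ∀ σ ∈ Ω, ∀ τ ∈ Ω, π τ = π σ → g τ = g σ) :
    ∑ σ ∈ Ω, g σ * pavg (Ω.filter (fun ρ => π ρ = π σ)) h = ∑ σ ∈ Ω, g σ * h σ := by
  have step1 : ∀ σ ∈ Ω, g σ * pavg (Ω.filter (fun ρ => π ρ = π σ)) h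
      = ∑ τ ∈ Ω, (if π τ = π σ then g σ * h τ / (Ω.filter (fun ρ => π ρ = π σ)).card else 0) := by
    intro σ hσ
    rw [← Finset.sum_filter]
    unfold pavg
    rw [Finset.sum_div, Finset.mul_sum]
    exact Finset.sum_congr rfl (fun τ _ => by rw [mul_div_assoc])
  rw [Finset.sum_congr rfl step1, Finset.sum_comm]
  apply Finset.sum_congr rfl
  intro τ hτ
  have hfibτ : τ ∈ Ω.filter (fun ρ => π ρ = π τ) := mem_fib_self Ω π hτ
  have hcard : (Ω.filter (fun ρ => π ρ = π τ)).card ≠ 0 :=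
    Finset.card_ne_zero_of_mem hfibτ
  calc ∑ σ ∈ Ω, (if π τ = π σ then g σ * h τ / (Ω.filter (fun ρ => π ρ = π σ)).card else 0)
      = ∑ σ ∈ Ω.filter (fun σ => π τ = π σ), g σ * h τ / (Ω.filter (fun ρ => π ρ = π σ)).card := by
        rw [Finset.sum_filter]
    _ = ∑ σ ∈ Ω.filter (fun σ => π τ = π σ), g τ * h τ / (Ω.filter (fun ρ => π ρ = π τ)).card := by
        apply Finset.sum_congr rfl
        intro σ hσ
        rw [Finset.mem_filter] at hσ
        have hσfib : σ ∈ Ω.filter (fun ρ => π ρ = π τ) := by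
          simp [Finset.mem_filter, hσ.1, hσ.2.symm]
        rw [fib_eq_of_mem Ω π hσfib, hg τ hτ σ hσ.1 hσ.2.symm]
    _ = g τ * h τ := by
        rw [Finset.sum_const]
        have : Ω.filter (fun σ => π τ = π σ) = Ω.filter (fun ρ => π ρ = π τ) := by
          apply Finset.filter_congr; intro ρ _; simp [eq_comm]
        rw [this, nsmul_eq_mul]
        field_simp

lemma sum_pavg_fib (Ω : Finset α) (π : α → β) (h : α → ℝ) :
    ∑ σ ∈ Ω, pavg (Ω.filter (fun ρ => π ρ = π σ)) h = ∑ σ ∈ Ω, h σ := by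
  have := sum_mul_pavg_fib Ω π (fun _ => 1) h (fun _ _ _ _ _ => rfl)
  simpa using this

lemma sum_comp_fiber {Ω D : Finset α} (hD : D ⊆ Ω) (π : α → β) (g : β → ℝ) :
    ∑ τ ∈ D, g (π τ) =
      ∑ w ∈ Ω.image π, ((D.filter (fun τ => π τ = w)).card : ℝ) * g w := by
  rw [← Finset.sum_fiberwise_of_maps_to (fun x hx => Finset.mem_image_of_mem π (hD hx))
    (fun τ => g (π τ))]
  apply Finset.sum_congr rfl
  intro w hw
  rw [Finset.sum_congr rfl (fun τ hτ => by rw [(Finset.mem_filter.mp hτ).2] :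
    ∀ τ ∈ D.filter (fun τ => π τ = w), g (π τ) = g w), Finset.sum_const, nsmul_eq_mul]

/-- Doeblin contraction. -/
lemma doeblin_contract (Ω : Finset α) (hΩ : Ω.Nonempty) (πW : α → β) (πS : α → γ)
    (δ : ℝ) (hδ0 : 0 < δ) (hδ1 : δ ≤ 1)
    (hDδ : ∀ σ ∈ Ω, ∀ τ ∈ Ω,
      δ * (((Ω.filter fun ρ => πS ρ = πS σ).card : ℝ) * ((Ω.filter fun ρ => πW ρ = πW τ).card))
        ≤ (Ω.card : ℝ) * ((Ω.filter fun ρ => πS ρ = πS σ ∧ πW ρ = πW τ).card))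
    (ub : β → ℝ) (hmean : ∑ τ ∈ Ω, ub (πW τ) = 0) :
    ∑ σ ∈ Ω, (pavg (Ω.filter fun ρ => πS ρ = πS σ) (fun τ => ub (πW τ)))^2
      ≤ (1-δ)^2 * ∑ σ ∈ Ω, (ub (πW σ))^2 := by
  have hnpos : (0:ℝ) < (Ω.card : ℝ) := by exact_mod_cast Finset.card_pos.mpr hΩ
  set n : ℝ := (Ω.card : ℝ) with hn
  set WI := Ω.image πW with hWI
  set S2 : ℝ := ∑ σ ∈ Ω, (ub (πW σ))^2 with hS2
  have hS2nn : 0 ≤ S2 := Finset.sum_nonneg fun _ _ => sq_nonneg _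
  have SΩu : ∑ w ∈ WI, ((Ω.filter fun τ => πW τ = w).card : ℝ) * ub w = 0 := by
    rw [← sum_comp_fiber (le_refl Ω) πW ub]; exact hmean
  have SΩu2 : ∑ w ∈ WI, ((Ω.filter fun τ => πW τ = w).card : ℝ) * (ub w)^2 = S2 := by
    rw [← sum_comp_fiber (le_refl Ω) πW (fun w => (ub w)^2)]
  have sumΩ : ∑ w ∈ WI, ((Ω.filter fun τ => πW τ = w).card : ℝ) = n := by
    rw [hn, Finset.card_eq_sum_card_fiberwise (fun x (hx : x ∈ Ω) => Finset.mem_image_of_mem πW hx)]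
    push_cast; rfl
  have key : ∀ σ ∈ Ω, (pavg (Ω.filter fun ρ => πS ρ = πS σ) (fun τ => ub (πW τ)))^2
      ≤ (1-δ) * (pavg (Ω.filter fun ρ => πS ρ = πS σ) (fun τ => (ub (πW τ))^2) - (δ/n) * S2) := by
    intro σ hσ
    set A := Ω.filter fun ρ => πS ρ = πS σ with hA
    have hAsub : A ⊆ Ω := Finset.filter_subset _ _
    have hAne : A.Nonempty := ⟨σ, by simp [hA, hσ]⟩
    have hnA : (0:ℝ) < (A.card : ℝ) := by exact_mod_cast Finset.card_pos.mpr hAne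
    have hnAn : (A.card : ℝ) ≤ n := by rw [hn]; exact_mod_cast Finset.card_le_card hAsub
    set mw : β → ℝ := fun w => ((A.filter fun τ => πW τ = w).card : ℝ) with hmw
    set nww : β → ℝ := fun w => ((Ω.filter fun τ => πW τ = w).card : ℝ) with hnww
    set c : β → ℝ := fun w => mw w / A.card - δ * nww w / n with hc
    have sumA : ∑ w ∈ WI, mw w = (A.card : ℝ) := by
      simp only [hmw]
      rw [← Nat.cast_sum,
        ← Finset.card_eq_sum_card_fiberwise (fun x hx => Finset.mem_image_of_mem πW (hAsub hx))]
    have SAu : ∑ w ∈ WI, mw w * ub w = (A.card : ℝ) * pavg A (fun τ => ub (πW τ)) := by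
      rw [sum_pavg_mul_card, ← sum_comp_fiber hAsub πW ub]
    have SAu2 : ∑ w ∈ WI, mw w * (ub w)^2 = (A.card : ℝ) * pavg A (fun τ => (ub (πW τ))^2) := by
      rw [sum_pavg_mul_card, ← sum_comp_fiber hAsub πW (fun w => (ub w)^2)]
    have hc0 : ∀ w ∈ WI, 0 ≤ c w := by
      intro w hw
      obtain ⟨τ, hτΩ, hτw⟩ := Finset.mem_image.mp hw
      have h0 := hDδ σ hσ τ hτΩ
      rw [hτw] at h0
      have hset : (Ω.filter fun ρ => πS ρ = πS σ ∧ πW ρ = w) = A.filter (fun τ => πW τ = w) := by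
        rw [hA, Finset.filter_filter]
      rw [hset] at h0
      have h1 : δ * nww w * (A.card : ℝ) ≤ mw w * n := by
        have : δ * (((A.card : ℝ)) * nww w) ≤ n * mw w := by
          simpa [hA, hmw, hnww, hn] using h0
        nlinarith
      simp only [hc, sub_nonneg]
      rw [div_le_div_iff₀ hnpos hnA]
      exact h1
    have hcsum : ∑ w ∈ WI, c w = 1 - δ := by
      simp only [hc]
      rw [Finset.sum_sub_distrib, ← Finset.sum_div, sumA, div_self (ne_of_gt hnA)]
      have : ∑ w ∈ WI, δ * nww w / n = δ := by
        simp only [mul_div_assoc]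
        rw [← Finset.mul_sum, ← Finset.sum_div, sumΩ, div_self (ne_of_gt hnpos), mul_one]
      rw [this]
    have hcub : ∑ w ∈ WI, c w * ub w = pavg A (fun τ => ub (πW τ)) := by
      have e : ∑ w ∈ WI, c w * ub w
          = (∑ w ∈ WI, mw w * ub w) / A.card - (δ/n) * ∑ w ∈ WI, nww w * ub w := by
        rw [Finset.sum_div, Finset.mul_sum, ← Finset.sum_sub_distrib]
        apply Finset.sum_congr rfl
        intro w hw
        simp only [hc]; ring
      rw [e, SAu, SΩu]
      rw [mul_div_cancel_left₀ _ (ne_of_gt hnA)]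
      simp
    have hcub2 : ∑ w ∈ WI, c w * (ub w)^2
        = pavg A (fun τ => (ub (πW τ))^2) - (δ/n) * S2 := by
      have e : ∑ w ∈ WI, c w * (ub w)^2
          = (∑ w ∈ WI, mw w * (ub w)^2) / A.card - (δ/n) * ∑ w ∈ WI, nww w * (ub w)^2 := by
        rw [Finset.sum_div, Finset.mul_sum, ← Finset.sum_sub_distrib]
        apply Finset.sum_congr rfl
        intro w hw
        simp only [hc]; ring
      rw [e, SAu2, SΩu2, mul_div_cancel_left₀ _ (ne_of_gt hnA)]
    have CS : (∑ w ∈ WI, c w * ub w)^2 ≤ (1-δ) * ∑ w ∈ WI, c w * (ub w)^2 := by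
      have h := Finset.sum_mul_sq_le_sq_mul_sq WI (fun w => Real.sqrt (c w))
        (fun w => Real.sqrt (c w) * ub w)
      have e1 : ∑ w ∈ WI, Real.sqrt (c w) * (Real.sqrt (c w) * ub w) = ∑ w ∈ WI, c w * ub w :=
        Finset.sum_congr rfl (fun w hw => by
          rw [← mul_assoc, Real.mul_self_sqrt (hc0 w hw)])
      have e2 : ∑ w ∈ WI, (Real.sqrt (c w))^2 = 1 - δ := by
        rw [← hcsum]
        exact Finset.sum_congr rfl (fun w hw => Real.sq_sqrt (hc0 w hw))
      have e3 : ∑ w ∈ WI, (Real.sqrt (c w) * ub w)^2 = ∑ w ∈ WI, c w * (ub w)^2 :=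
        Finset.sum_congr rfl (fun w hw => by
          rw [mul_pow, Real.sq_sqrt (hc0 w hw)])
      rw [e1, e2, e3] at h
      exact h
    calc (pavg A (fun τ => ub (πW τ)))^2 = (∑ w ∈ WI, c w * ub w)^2 := by rw [hcub]
      _ ≤ (1-δ) * ∑ w ∈ WI, c w * (ub w)^2 := CS
      _ = (1-δ) * (pavg A (fun τ => (ub (πW τ))^2) - (δ/n) * S2) := by rw [hcub2]
  have hsum := Finset.sum_le_sum key
  have tower : ∑ σ ∈ Ω, pavg (Ω.filter fun ρ => πS ρ = πS σ) (fun τ => (ub (πW τ))^2) = S2 :=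
    sum_pavg_fib Ω πS (fun τ => (ub (πW τ))^2)
  calc ∑ σ ∈ Ω, (pavg (Ω.filter fun ρ => πS ρ = πS σ) (fun τ => ub (πW τ)))^2
      ≤ ∑ σ ∈ Ω, (1-δ) * (pavg (Ω.filter fun ρ => πS ρ = πS σ) (fun τ => (ub (πW τ))^2) - (δ/n) * S2) := hsum
    _ = (1-δ) * (S2 - n * ((δ/n) * S2)) := by
        rw [← Finset.mul_sum, Finset.sum_sub_distrib, tower, Finset.sum_const, nsmul_eq_mul, hn]
    _ = (1-δ)^2 * S2 := by
        field_simp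

/-- **Abstract two-block factorization of variance.** -/
theorem two_block (Ω : Finset α) (hΩ : Ω.Nonempty) (πW : α → β) (πS : α → γ)
    (K : ℝ) (hK : 1 ≤ K)
    (hD : ∀ σ ∈ Ω, ∀ τ ∈ Ω, ((Ω.filter fun ρ => πW ρ = πW τ).card : ℝ)
        ≤ K * ((Ω.filter fun ρ => πS ρ = πS σ ∧ πW ρ = πW τ).card))
    (f : α → ℝ) :
    varOn Ω f ≤ K * ((pavg Ω fun σ => varOn (Ω.filter fun ρ => πW ρ = πW σ) f)
      + (pavg Ω fun σ => varOn (Ω.filter fun ρ => πS ρ = πS σ) f)) := by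
  have hK0 : (0:ℝ) < K := lt_of_lt_of_le one_pos hK
  set δ : ℝ := 1/K with hδ
  have hδ0 : 0 < δ := by positivity
  have hδ1 : δ ≤ 1 := by rw [hδ]; rw [div_le_one hK0]; exact hK
  have hδK : δ * K = 1 := by rw [hδ]; field_simp
  have hnpos : (0:ℝ) < (Ω.card : ℝ) := by exact_mod_cast Finset.card_pos.mpr hΩ
  set n : ℝ := (Ω.card : ℝ) with hn
  set f0 : α → ℝ := fun a => f a - pavg Ω f with hf0
  have hfibWne : ∀ σ ∈ Ω, (Ω.filter fun ρ => πW ρ = πW σ).Nonempty :=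
    fun σ hσ => ⟨σ, by simp [hσ]⟩
  have hfibSne : ∀ σ ∈ Ω, (Ω.filter fun ρ => πS ρ = πS σ).Nonempty :=
    fun σ hσ => ⟨σ, by simp [hσ]⟩
  -- replace f by f0 everywhere
  rw [show varOn Ω f = varOn Ω f0 from (varOn_const_shift hΩ f _).symm,
    pavg_congr (fun σ hσ => (varOn_const_shift (hfibWne σ hσ) f _).symm),
    pavg_congr (fun σ hσ => (varOn_const_shift (hfibSne σ hσ) f _).symm)]
  have hmean0 : ∑ a ∈ Ω, f0 a = 0 := by
    have h1 := sum_pavg_mul_card (A := Ω) f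
    simp only [hf0]
    rw [Finset.sum_sub_distrib, Finset.sum_const, nsmul_eq_mul, ← h1, ← hn]
    ring
  have hpavgf0 : pavg Ω f0 = 0 := by
    rw [hf0, pavg_const_shift hΩ, sub_self]
  set ub : β → ℝ := fun w => pavg (Ω.filter fun ρ => πW ρ = w) f0 with hub
  set vb : γ → ℝ := fun x => pavg (Ω.filter fun ρ => πS ρ = x) f0 with hvb
  set u : α → ℝ := fun σ => ub (πW σ) with hu
  set v : α → ℝ := fun σ => vb (πS σ) with hv
  set F : ℝ := ∑ σ ∈ Ω, (f0 σ)^2 with hF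
  set A2 : ℝ := ∑ σ ∈ Ω, (u σ)^2 with hA2
  set B2 : ℝ := ∑ σ ∈ Ω, (v σ)^2 with hB2
  set P : ℝ := ∑ σ ∈ Ω, u σ * v σ with hP
  have hFnn : 0 ≤ F := Finset.sum_nonneg fun _ _ => sq_nonneg _
  have hA2nn : 0 ≤ A2 := Finset.sum_nonneg fun _ _ => sq_nonneg _
  have hB2nn : 0 ≤ B2 := Finset.sum_nonneg fun _ _ => sq_nonneg _
  have humean : ∑ σ ∈ Ω, u σ = 0 := by
    have := sum_pavg_fib Ω πW f0
    rw [hmean0] at this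
    exact this
  have huf : ∑ σ ∈ Ω, u σ * f0 σ = A2 := by
    have := sum_mul_pavg_fib Ω πW u f0
      (fun σ hσ τ hτ h => by simp only [hu]; rw [h])
    rw [← this, hA2]
    apply Finset.sum_congr rfl
    intro σ hσ
    rw [sq]
  have hvf : ∑ σ ∈ Ω, v σ * f0 σ = B2 := by
    have := sum_mul_pavg_fib Ω πS v f0
      (fun σ hσ τ hτ h => by simp only [hv]; rw [h])
    rw [← this, hB2]
    apply Finset.sum_congr rfl
    intro σ hσ
    rw [sq]
  -- Doeblin condition
  have hDδ : ∀ σ ∈ Ω, ∀ τ ∈ Ω,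
      δ * (((Ω.filter fun ρ => πS ρ = πS σ).card : ℝ) * ((Ω.filter fun ρ => πW ρ = πW τ).card))
        ≤ (Ω.card : ℝ) * ((Ω.filter fun ρ => πS ρ = πS σ ∧ πW ρ = πW τ).card) := by
    intro σ hσ τ hτ
    have h1 := hD σ hσ τ hτ
    have hxn : ((Ω.filter fun ρ => πS ρ = πS σ).card : ℝ) ≤ (Ω.card : ℝ) := by
      exact_mod_cast Finset.card_le_card (Finset.filter_subset _ _)
    have hxnn : (0:ℝ) ≤ ((Ω.filter fun ρ => πS ρ = πS σ).card : ℝ) := Nat.cast_nonneg _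
    have hxwnn : (0:ℝ) ≤ ((Ω.filter fun ρ => πS ρ = πS σ ∧ πW ρ = πW τ).card : ℝ) :=
      Nat.cast_nonneg _
    calc δ * (((Ω.filter fun ρ => πS ρ = πS σ).card : ℝ) * ((Ω.filter fun ρ => πW ρ = πW τ).card))
        ≤ δ * (((Ω.filter fun ρ => πS ρ = πS σ).card : ℝ)
            * (K * ((Ω.filter fun ρ => πS ρ = πS σ ∧ πW ρ = πW τ).card))) := by
          apply mul_le_mul_of_nonneg_left _ (le_of_lt hδ0)
          exact mul_le_mul_of_nonneg_left h1 hxnn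
      _ = (δ * K) * (((Ω.filter fun ρ => πS ρ = πS σ).card : ℝ)
            * ((Ω.filter fun ρ => πS ρ = πS σ ∧ πW ρ = πW τ).card)) := by ring
      _ = ((Ω.filter fun ρ => πS ρ = πS σ).card : ℝ)
            * ((Ω.filter fun ρ => πS ρ = πS σ ∧ πW ρ = πW τ).card) := by rw [hδK, one_mul]
      _ ≤ (Ω.card : ℝ) * ((Ω.filter fun ρ => πS ρ = πS σ ∧ πW ρ = πW τ).card) :=
          mul_le_mul_of_nonneg_right hxn hxwnn
  have hΨ : ∑ σ ∈ Ω, (pavg (Ω.filter fun ρ => πS ρ = πS σ) u)^2 ≤ (1-δ)^2 * A2 := by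
    have := doeblin_contract Ω hΩ πW πS δ hδ0 hδ1 hDδ ub humean
    exact this
  have hΨnn : (0:ℝ) ≤ ∑ σ ∈ Ω, (pavg (Ω.filter fun ρ => πS ρ = πS σ) u)^2 :=
    Finset.sum_nonneg fun _ _ => sq_nonneg _
  -- P ≤ (1-δ)/2 (A2+B2)
  have hPle : P ≤ (1-δ)/2 * (A2 + B2) := by
    have hPψ : P = ∑ σ ∈ Ω, v σ * pavg (Ω.filter fun ρ => πS ρ = πS σ) u := by
      rw [hP, sum_mul_pavg_fib Ω πS v u (fun σ hσ τ hτ h => by simp only [hv]; rw [h])]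
      exact Finset.sum_congr rfl fun σ _ => mul_comm _ _
    have hCS := Finset.sum_mul_sq_le_sq_mul_sq Ω v (fun σ => pavg (Ω.filter fun ρ => πS ρ = πS σ) u)
    rw [← hPψ] at hCS
    have hB2' : ∑ σ ∈ Ω, (v σ)^2 = B2 := rfl
    have hP2 : P^2 ≤ B2 * ((1-δ)^2 * A2) := le_trans hCS (by
      apply mul_le_mul_of_nonneg_left hΨ hB2nn)
    set t : ℝ := (1-δ)/2 * (A2 + B2) with ht
    have htnn : 0 ≤ t := by
      apply mul_nonneg _ (by linarith)
      linarith
    have hP2t : P^2 ≤ t^2 := by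
      refine le_trans hP2 ?_
      rw [ht]
      nlinarith [sq_nonneg (A2 - B2), sq_nonneg (1-δ)]
    calc P ≤ |P| := le_abs_self P
      _ = Real.sqrt (P^2) := (Real.sqrt_sq_eq_abs P).symm
      _ ≤ Real.sqrt (t^2) := Real.sqrt_le_sqrt hP2t
      _ = t := by rw [Real.sqrt_sq htnn]
  -- A2 + B2 ≤ (2-δ) F
  have hs : A2 + B2 ≤ (2-δ) * F := by
    have hsum_uv : A2 + B2 = ∑ σ ∈ Ω, f0 σ * (u σ + v σ) := by
      rw [← huf, ← hvf, ← Finset.sum_add_distrib]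
      exact Finset.sum_congr rfl fun σ _ => by ring
    have hCS := Finset.sum_mul_sq_le_sq_mul_sq Ω f0 (fun σ => u σ + v σ)
    have huv2 : ∑ σ ∈ Ω, (u σ + v σ)^2 = A2 + B2 + 2*P := by
      rw [hA2, hB2, hP]
      rw [← Finset.sum_add_distrib, Finset.mul_sum, ← Finset.sum_add_distrib]
      exact Finset.sum_congr rfl fun σ _ => by ring
    rw [huv2, ← hsum_uv] at hCS
    have h2 : (A2+B2)^2 ≤ F * ((2-δ)*(A2+B2)) := by
      refine le_trans hCS ?_
      apply mul_le_mul_of_nonneg_left _ hFnn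
      linarith
    rcases eq_or_lt_of_le (add_nonneg hA2nn hB2nn) with h0 | hpos
    · rw [← h0]
      exact mul_nonneg (by linarith) hFnn
    · nlinarith
  -- final assembly
  have hvarW : (pavg Ω fun σ => varOn (Ω.filter fun ρ => πW ρ = πW σ) f0) = (F - A2)/n := by
    have : ∑ σ ∈ Ω, varOn (Ω.filter fun ρ => πW ρ = πW σ) f0 = F - A2 := by
      rw [Finset.sum_congr rfl (fun σ hσ => varOn_eq (hfibWne σ hσ) f0),
        Finset.sum_sub_distrib, sum_pavg_fib Ω πW (fun a => f0 a ^2)]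
    rw [show (pavg Ω fun σ => varOn (Ω.filter fun ρ => πW ρ = πW σ) f0)
      = (∑ σ ∈ Ω, varOn (Ω.filter fun ρ => πW ρ = πW σ) f0)/n from rfl, this]
  have hvarS : (pavg Ω fun σ => varOn (Ω.filter fun ρ => πS ρ = πS σ) f0) = (F - B2)/n := by
    have : ∑ σ ∈ Ω, varOn (Ω.filter fun ρ => πS ρ = πS σ) f0 = F - B2 := by
      rw [Finset.sum_congr rfl (fun σ hσ => varOn_eq (hfibSne σ hσ) f0),
        Finset.sum_sub_distrib, sum_pavg_fib Ω πS (fun a => f0 a ^2)]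
    rw [show (pavg Ω fun σ => varOn (Ω.filter fun ρ => πS ρ = πS σ) f0)
      = (∑ σ ∈ Ω, varOn (Ω.filter fun ρ => πS ρ = πS σ) f0)/n from rfl, this]
  have hvarΩ : varOn Ω f0 = F/n := by
    rw [varOn_eq hΩ f0, hpavgf0]
    simp [pavg, hF, hn]
  rw [hvarΩ, hvarW, hvarS]
  have hkey : F ≤ K * ((F - A2) + (F - B2)) := by
    have h1 : δ * F ≤ (F - A2) + (F - B2) := by nlinarith
    have h2 : K * (δ * F) ≤ K * ((F - A2) + (F - B2)) :=
      mul_le_mul_of_nonneg_left h1 (le_of_lt hK0)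
    calc F = K * (δ * F) := by rw [show K * (δ*F) = (δ*K)*F by ring, hδK, one_mul]
      _ ≤ _ := h2
  calc F/n ≤ (K * ((F - A2) + (F - B2)))/n := by gcongr
    _ = K * ((F - A2)/n + (F - B2)/n) := by ring

end AbstractVariance

section ColoringParts

variable {V : Type*} [Fintype V] [DecidableEq V] {C : Type*} [Fintype C] [DecidableEq C]

/-- Proper colorings extending the partial coloring `ξ` on `Λ`. -/
def Ecol (G : SimpleGraph V) (L : V → Finset C) (Λ : Finset V) (ξ : V → C) : Finset (V → C) :=
  Finset.univ.filter (fun σ => isListColoring G L σ ∧ ∀ u ∈ Λ, σ u = ξ u)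

lemma mem_Ecol {G : SimpleGraph V} {L : V → Finset C} {Λ : Finset V} {ξ σ : V → C} :
    σ ∈ Ecol G L Λ ξ ↔ isListColoring G L σ ∧ ∀ u ∈ Λ, σ u = ξ u := by
  simp [Ecol]

/-- Greedy extension: any proper partial list coloring extends. -/
lemma extend_aux {G : SimpleGraph V} {L : V → Finset C}
    (hL2 : ∀ v, gdeg G v + 2 ≤ (L v).card) :
    ∀ (n : ℕ) (Λ : Finset V) (ξ : V → C), (Finset.univ \ Λ).card ≤ n →
      (∀ u ∈ Λ, ξ u ∈ L u) → (∀ a ∈ Λ, ∀ b ∈ Λ, G.Adj a b → ξ a ≠ ξ b) →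
      (Ecol G L Λ ξ).Nonempty := by
  intro n
  induction n with
  | zero =>
    intro Λ ξ hcard hmem hprop
    have hΛ : ∀ u : V, u ∈ Λ := by
      intro u
      by_contra hu
      have : u ∈ Finset.univ \ Λ := by simp [hu]
      have := Finset.card_pos.mpr ⟨u, this⟩
      omega
    refine ⟨ξ, mem_Ecol.mpr ⟨⟨fun u => hmem u (hΛ u), fun a b hab => hprop a (hΛ a) b (hΛ b) hab⟩,
      fun u _ => rfl⟩⟩
  | succ n ih =>
    intro Λ ξ hcard hmem hprop
    by_cases hfull : ∀ u : V, u ∈ Λ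
    · exact ⟨ξ, mem_Ecol.mpr ⟨⟨fun u => hmem u (hfull u), fun a b hab => hprop a (hfull a) b (hfull b) hab⟩,
        fun u _ => rfl⟩⟩
    push_neg at hfull
    obtain ⟨v, hvΛ⟩ := hfull
    have hvmem : v ∈ Finset.univ \ Λ := by simp [hvΛ]
    set forb := (Λ.filter (fun u => G.Adj v u)).image ξ with hforb
    have hforbcard : forb.card ≤ gdeg G v := by
      calc forb.card ≤ (Λ.filter (fun u => G.Adj v u)).card := Finset.card_image_le
        _ ≤ (Finset.univ.filter (fun u => G.Adj v u)).card :=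
          Finset.card_le_card (Finset.filter_subset_filter _ (Finset.subset_univ Λ))
    have havail : (L v \ forb).Nonempty := by
      rw [← Finset.card_pos]
      have h1 : (L v).card - forb.card ≤ (L v \ forb).card := Finset.le_card_sdiff _ _
      have h2 := hL2 v
      omega
    obtain ⟨c, hc⟩ := havail
    have hcL : c ∈ L v := (Finset.mem_sdiff.mp hc).1
    have hcforb : c ∉ forb := (Finset.mem_sdiff.mp hc).2
    have step : (Ecol G L (insert v Λ) (Function.update ξ v c)).Nonempty := by
      apply ih
      · have heq : Finset.univ \ insert v Λ = (Finset.univ \ Λ).erase v := by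
          ext u
          simp only [Finset.mem_sdiff, Finset.mem_erase, Finset.mem_insert, Finset.mem_univ,
            true_and]
          tauto
        rw [heq, Finset.card_erase_of_mem hvmem]
        omega
      · intro u hu
        rcases Finset.mem_insert.mp hu with rfl | hu2
        · rw [Function.update_self]; exact hcL
        · have hne : u ≠ v := by rintro rfl; exact hvΛ hu2
          rw [Function.update_of_ne hne]
          exact hmem u hu2
      · intro a ha b hb hab
        rcases Finset.mem_insert.mp ha with rfl | ha2
        · rcases Finset.mem_insert.mp hb with rfl | hb2
          · exact absurd hab (G.irrefl)
          · have hne : b ≠ a := by rintro rfl; exact hvΛ hb2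
            rw [Function.update_self, Function.update_of_ne hne]
            intro hcontra
            exact hcforb (Finset.mem_image.mpr ⟨b, Finset.mem_filter.mpr ⟨hb2, hab⟩, hcontra.symm⟩)
        · rcases Finset.mem_insert.mp hb with rfl | hb2
          · have hne : a ≠ b := by rintro rfl; exact hvΛ ha2
            rw [Function.update_self, Function.update_of_ne hne]
            intro hcontra
            exact hcforb (Finset.mem_image.mpr ⟨a, Finset.mem_filter.mpr ⟨ha2, hab.symm⟩, hcontra⟩)
          · have hnea : a ≠ v := by rintro rfl; exact hvΛ ha2
            have hneb : b ≠ v := by rintro rfl; exact hvΛ hb2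
            rw [Function.update_of_ne hnea, Function.update_of_ne hneb]
            exact hprop a ha2 b hb2 hab
    obtain ⟨σ, hσ⟩ := step
    rw [mem_Ecol] at hσ
    refine ⟨σ, mem_Ecol.mpr ⟨hσ.1, fun u hu => ?_⟩⟩
    have hne : u ≠ v := by rintro rfl; exact hvΛ hu
    rw [hσ.2 u (Finset.mem_insert_of_mem hu), Function.update_of_ne hne]

lemma extend_greedy {G : SimpleGraph V} {L : V → Finset C}
    (hL2 : ∀ v, gdeg G v + 2 ≤ (L v).card) (Λ : Finset V) (ξ : V → C)
    (hmem : ∀ u ∈ Λ, ξ u ∈ L u) (hprop : ∀ a ∈ Λ, ∀ b ∈ Λ, G.Adj a b → ξ a ≠ ξ b) :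
    (Ecol G L Λ ξ).Nonempty :=
  extend_aux hL2 (Finset.univ \ Λ).card Λ ξ le_rfl hmem hprop

/-- Single-vertex comparison: pinning one more vertex to an extendable color
costs at most a factor `2^Δ * q`. -/
lemma inj_step {G : SimpleGraph V} {L : V → Finset C} {Δ q : ℕ}
    (hdeg : ∀ v, gdeg G v ≤ Δ)
    (hL2 : ∀ v, gdeg G v + 2 ≤ (L v).card) (hLq : ∀ v, (L v).card ≤ q)
    (Λ : Finset V) (ξ : V → C) (v : V) (hv : v ∉ Λ) (c : C)
    (hne : (Ecol G L (insert v Λ) (Function.update ξ v c)).Nonempty) :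
    (Ecol G L Λ ξ).card ≤ 2^Δ * q * (Ecol G L (insert v Λ) (Function.update ξ v c)).card := by
  obtain ⟨ρ, hρ⟩ := hne
  rw [mem_Ecol] at hρ
  have hρv : ρ v = c := by
    rw [hρ.2 v (Finset.mem_insert_self v Λ), Function.update_self]
  have hcL : c ∈ L v := hρv ▸ hρ.1.1 v
  have hΛc : ∀ b ∈ Λ, G.Adj v b → ξ b ≠ c := by
    intro b hb hab hcontra
    have hbv : b ≠ v := by rintro rfl; exact hv hb
    have h1 : ρ b = ξ b := by
      rw [hρ.2 b (Finset.mem_insert_of_mem hb), Function.update_of_ne hbv]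
    exact hρ.1.2 v b hab (by rw [hρv, h1, hcontra])
  set T := Ecol G L (insert v Λ) (Function.update ξ v c) with hT
  set N := T.card with hN
  -- fiberwise decomposition by the color at v
  have hmaps : ∀ σ ∈ Ecol G L Λ ξ, σ v ∈ L v := fun σ hσ => (mem_Ecol.mp hσ).1.1 v
  rw [Finset.card_eq_sum_card_fiberwise hmaps]
  -- per-fiber bound
  have hfiber : ∀ c' ∈ L v, ((Ecol G L Λ ξ).filter (fun σ => σ v = c')).card ≤ 2^Δ * N := by
    intro c' _
    set Nv := Finset.univ.filter (fun u => G.Adj v u) with hNv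
    set Src := (Ecol G L Λ ξ).filter (fun σ => σ v = c') with hSrc
    -- the recoloring data
    set D : (V → C) → Finset V :=
      fun σ => Finset.univ.filter (fun u => G.Adj v u ∧ u ∉ Λ ∧ σ u = c) with hD
    set avail : (V → C) → V → Finset C := fun σ u =>
      L u \ insert c (((Finset.univ.filter (fun w => G.Adj u w)).erase v).image σ) with havail
    set newC : (V → C) → V → C := fun σ u =>
      if h : (avail σ u).Nonempty then h.choose else σ u with hnewC
    set recol : (V → C) → (V → C) := fun σ w =>
      if w = v then c else if w ∈ D σ then newC σ w else σ w with hrecol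
    have availNe : ∀ σ u, u ∈ D σ → (avail σ u).Nonempty := by
      intro σ u hu
      simp only [hD, Finset.mem_filter] at hu
      have hadj : G.Adj u v := hu.2.1.symm
      have hvmem : v ∈ Finset.univ.filter (fun w => G.Adj u w) := by
        simp [hadj]
      have hdegu : (Finset.univ.filter (fun w => G.Adj u w)).card = gdeg G u := rfl
      have hcard1 : ((Finset.univ.filter (fun w => G.Adj u w)).erase v).card = gdeg G u - 1 := by
        rw [Finset.card_erase_of_mem hvmem, hdegu]
      have hdeg1 : 1 ≤ gdeg G u := by
        rw [← hdegu]
        exact Finset.card_pos.mpr ⟨v, hvmem⟩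
      have hforb : (insert c (((Finset.univ.filter (fun w => G.Adj u w)).erase v).image σ)).card
          ≤ gdeg G u := by
        calc _ ≤ (((Finset.univ.filter (fun w => G.Adj u w)).erase v).image σ).card + 1 :=
              Finset.card_insert_le _ _
          _ ≤ ((Finset.univ.filter (fun w => G.Adj u w)).erase v).card + 1 :=
              Nat.add_le_add_right Finset.card_image_le 1
          _ ≤ gdeg G u := by omega
      rw [← Finset.card_pos]
      have h1 := Finset.le_card_sdiff
        (insert c (((Finset.univ.filter (fun w => G.Adj u w)).erase v).image σ)) (L u)
      have h2 := hL2 u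
      simp only [havail]
      omega
    have newCmem : ∀ σ u, u ∈ D σ → newC σ u ∈ avail σ u := by
      intro σ u hu
      simp only [hnewC]
      rw [dif_pos (availNe σ u hu)]
      exact (availNe σ u hu).choose_spec
    have newCL : ∀ σ u, u ∈ D σ → newC σ u ∈ L u := fun σ u hu =>
      (Finset.mem_sdiff.mp (newCmem σ u hu)).1
    have newCnec : ∀ σ u, u ∈ D σ → newC σ u ≠ c := by
      intro σ u hu hcontra
      have hmem := (Finset.mem_sdiff.mp (newCmem σ u hu)).2
      apply hmem
      rw [hcontra]
      exact Finset.mem_insert_self c _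
    have newCneσ : ∀ σ u, u ∈ D σ → ∀ w, G.Adj u w → w ≠ v → newC σ u ≠ σ w := by
      intro σ u hu w hadj hwv hcontra
      have := (Finset.mem_sdiff.mp (newCmem σ u hu)).2
      apply this
      apply Finset.mem_insert_of_mem
      exact Finset.mem_image.mpr ⟨w, Finset.mem_erase.mpr ⟨hwv, by simp [hadj]⟩, hcontra.symm⟩
    -- the map
    apply Finset.card_le_card_of_injOn (fun σ => (recol σ, D σ))
      (t := T ×ˢ Nv.powerset) ?_ ?_ |>.trans
    · rw [Finset.card_product, Finset.card_powerset]
      have : Nv.card = gdeg G v := rfl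
      rw [this]
      calc N * 2 ^ gdeg G v ≤ N * 2^Δ := by
            exact Nat.mul_le_mul_left N (Nat.pow_le_pow_right (by norm_num) (hdeg v))
        _ = 2^Δ * N := Nat.mul_comm _ _
    · -- maps to
      intro σ hσ
      simp only [Finset.mem_coe, hSrc, Finset.mem_filter] at hσ
      obtain ⟨hσE, hσv⟩ := hσ
      rw [mem_Ecol] at hσE
      obtain ⟨⟨hσL, hσP⟩, hσΛ⟩ := hσE
      have hDsub : D σ ⊆ Nv := by
        intro u hu
        simp only [hD, Finset.mem_filter] at hu
        simp [hNv, hu.2.1]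
      have hvnotD : v ∉ D σ := by
        simp only [hD, Finset.mem_filter]
        rintro ⟨-, hadj, -⟩
        exact G.irrefl hadj
      have hDne : ∀ u ∈ D σ, u ≠ v := by
        intro u hu
        simp only [hD, Finset.mem_filter] at hu
        exact fun h => G.irrefl (h ▸ hu.2.1)
      -- properness of recol σ
      have hnotDc : ∀ x, x ≠ v → x ∉ D σ → G.Adj v x → σ x ≠ c := by
        intro x hxv hxD hadj hcontra
        by_cases hxΛ : x ∈ Λ
        · exact hΛc x hxΛ hadj ((hσΛ x hxΛ).symm.trans hcontra)
        · exact hxD (by simp [hD, hadj, hxΛ, hcontra])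
      have hrecolP : ∀ a b, G.Adj a b → recol σ a ≠ recol σ b := by
        intro a b hab
        rcases eq_or_ne a v with hav | hav
        · rw [hav] at hab
          rw [hav]
          have hbv : b ≠ v := fun h => G.irrefl (h ▸ hab)
          simp only [hrecol, if_pos rfl, if_neg hbv]
          by_cases hbD : b ∈ D σ
          · rw [if_pos hbD]
            exact (newCnec σ b hbD).symm
          · rw [if_neg hbD]
            exact fun h => hnotDc b hbv hbD hab h.symm
        · rcases eq_or_ne b v with hbv | hbv
          · rw [hbv] at hab
            rw [hbv]
            simp only [hrecol, if_pos rfl, if_neg hav]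
            by_cases haD : a ∈ D σ
            · rw [if_pos haD]
              exact newCnec σ a haD
            · rw [if_neg haD]
              exact hnotDc a hav haD hab.symm
          · simp only [hrecol, if_neg hav, if_neg hbv]
            by_cases haD : a ∈ D σ <;> by_cases hbD : b ∈ D σ
            · rw [if_pos haD, if_pos hbD]
              intro hcontra
              have ha' : σ a = c := by simp only [hD, Finset.mem_filter] at haD; exact haD.2.2.2
              have hb' : σ b = c := by simp only [hD, Finset.mem_filter] at hbD; exact hbD.2.2.2
              exact hσP a b hab (by rw [ha', hb'])
            · rw [if_pos haD, if_neg hbD]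
              exact newCneσ σ a haD b hab hbv
            · rw [if_neg haD, if_pos hbD]
              exact fun h => newCneσ σ b hbD a hab.symm hav h.symm
            · rw [if_neg haD, if_neg hbD]
              exact hσP a b hab
      have hrecolT : recol σ ∈ T := by
        rw [hT, mem_Ecol]
        refine ⟨⟨?_, hrecolP⟩, ?_⟩
        · intro w
          simp only [hrecol]
          by_cases hwv : w = v
          · rw [if_pos hwv, hwv]; exact hcL
          · rw [if_neg hwv]
            by_cases hwD : w ∈ D σ
            · rw [if_pos hwD]; exact newCL σ w hwD
            · rw [if_neg hwD]; exact hσL w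
        · intro u hu
          rcases Finset.mem_insert.mp hu with rfl | hu2
          · simp only [hrecol, if_pos rfl, Function.update_self]
          · have hune : u ≠ v := by rintro rfl; exact hv hu2
            have hunotD : u ∉ D σ := by
              simp only [hD, Finset.mem_filter]
              rintro ⟨-, -, huΛ, -⟩
              exact huΛ hu2
            simp only [hrecol, if_neg hune, if_neg hunotD]
            rw [hσΛ u hu2, Function.update_of_ne hune]
      rw [Finset.mem_coe, Finset.mem_product]
      exact ⟨hrecolT, Finset.mem_powerset.mpr hDsub⟩
    · -- injectivity
      intro σ1 hσ1 σ2 hσ2 heq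
      simp only [Prod.mk.injEq] at heq
      have hrec : ∀ σ, σ ∈ Src → ∀ w, σ w
          = if w = v then c' else if w ∈ D σ then c else recol σ w := by
        intro σ hσ w
        rw [hSrc, Finset.mem_filter] at hσ
        by_cases hwv : w = v
        · rw [if_pos hwv, hwv, hσ.2]
        · rw [if_neg hwv]
          by_cases hwD : w ∈ D σ
          · rw [if_pos hwD]
            simp only [hD, Finset.mem_filter] at hwD
            exact hwD.2.2.2
          · rw [if_neg hwD]
            simp only [hrecol, if_neg hwv, if_neg hwD]
      funext w
      rw [hrec σ1 hσ1 w, hrec σ2 hσ2 w, heq.1, heq.2]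
  calc ∑ c' ∈ L v, ((Ecol G L Λ ξ).filter (fun σ => σ v = c')).card
      ≤ ∑ c' ∈ L v, 2^Δ * N := Finset.sum_le_sum hfiber
    _ = (L v).card * (2^Δ * N) := by rw [Finset.sum_const, smul_eq_mul]
    _ ≤ q * (2^Δ * N) := Nat.mul_le_mul_right _ (hLq v)
    _ = 2^Δ * q * N := by ring

lemma Ecol_anti {G : SimpleGraph V} {L : V → Finset C} {Λ1 Λ2 : Finset V} (h : Λ1 ⊆ Λ2)
    (ξ : V → C) : Ecol G L Λ2 ξ ⊆ Ecol G L Λ1 ξ := by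
  intro σ hσ
  rw [mem_Ecol] at hσ ⊢
  exact ⟨hσ.1, fun u hu => hσ.2 u (h hu)⟩

/-- Telescoped comparison over a set `S'` of pinned vertices. -/
lemma inj_tele {G : SimpleGraph V} {L : V → Finset C} {Δ q : ℕ}
    (hdeg : ∀ v, gdeg G v ≤ Δ)
    (hL2 : ∀ v, gdeg G v + 2 ≤ (L v).card) (hLq : ∀ v, (L v).card ≤ q)
    (S' : Finset V) : ∀ (Λ : Finset V) (ξ : V → C), Disjoint Λ S' →
      (Ecol G L (Λ ∪ S') ξ).Nonempty →
      (Ecol G L Λ ξ).card ≤ (2^Δ * q)^(S'.card) * (Ecol G L (Λ ∪ S') ξ).card := by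
  induction S' using Finset.induction_on with
  | empty =>
    intro Λ ξ _ _
    simp
  | @insert a S' ha ih =>
    intro Λ ξ hdisj hne
    have haS' : a ∉ S' := ha
    have haΛ : a ∉ Λ := by
      have := Finset.disjoint_insert_right.mp hdisj
      exact this.1
    have hsets : insert a Λ ∪ S' = Λ ∪ insert a S' := by
      rw [Finset.insert_union, Finset.union_insert]
    have hne' : (Ecol G L (insert a Λ ∪ S') ξ).Nonempty := by
      rw [hsets]; exact hne
    have hne1 : (Ecol G L (insert a Λ) (Function.update ξ a (ξ a))).Nonempty := by
      rw [Function.update_eq_self]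
      exact hne'.mono (Ecol_anti Finset.subset_union_left ξ)
    have step1 := inj_step hdeg hL2 hLq Λ ξ a haΛ (ξ a) hne1
    rw [Function.update_eq_self] at step1
    have hdisj2 : Disjoint (insert a Λ) S' := by
      rw [Finset.disjoint_insert_left]
      exact ⟨haS', (Finset.disjoint_insert_right.mp hdisj).2⟩
    have step2 := ih (insert a Λ) ξ hdisj2 hne'
    rw [hsets] at step2
    calc (Ecol G L Λ ξ).card ≤ 2^Δ * q * (Ecol G L (insert a Λ) ξ).card := step1
      _ ≤ 2^Δ * q * ((2^Δ * q)^(S'.card) * (Ecol G L (Λ ∪ insert a S') ξ).card) :=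
          Nat.mul_le_mul_left _ step2
      _ = (2^Δ * q)^((insert a S').card) * (Ecol G L (Λ ∪ insert a S') ξ).card := by
          rw [Finset.card_insert_of_notMem haS', pow_succ]
          ring


lemma pmean_condD {G : SimpleGraph V} {L : V → Finset C}
    (hNc : (Finset.univ.filter (fun τ : V → C => isListColoring G L τ)).Nonempty)
    (B' : Finset V) (σ0 : V → C)
    (hfib : (Finset.univ.filter
      (fun τ : V → C => isListColoring G L τ ∧ ∀ v, v ∉ B' → τ v = σ0 v)).Nonempty)
    (g : (V → C) → ℝ) :
    pmean (condD (colMu G L) B' σ0) g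
      = pavg (Finset.univ.filter
          (fun τ : V → C => isListColoring G L τ ∧ ∀ v, v ∉ B' → τ v = σ0 v)) g := by
  set Nc := (Finset.univ.filter (fun τ : V → C => isListColoring G L τ)).card with hNcdef
  set fib := Finset.univ.filter
    (fun τ : V → C => isListColoring G L τ ∧ ∀ v, v ∉ B' → τ v = σ0 v) with hfibdef
  have hNc0 : (Nc : ℝ) ≠ 0 := by
    have := Finset.card_pos.mpr hNc
    simp only [hNcdef]
    positivity
  have hfib0 : (fib.card : ℝ) ≠ 0 := by
    have := Finset.card_pos.mpr hfib
    positivity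
  have hsum : ∑ τ' ∈ Finset.univ.filter (fun τ' : V → C => ∀ v, v ∉ B' → τ' v = σ0 v),
      colMu G L τ' = (fib.card : ℝ) / Nc := by
    unfold colMu
    rw [← Finset.sum_div]
    congr 1
    rw [Finset.sum_boole]
    norm_cast
    congr 1
    ext τ
    simp only [Finset.mem_filter, Finset.mem_univ, true_and, hfibdef]
    tauto
  unfold pmean condD
  rw [hsum]
  have hterm : ∀ τ : V → C,
      (if ∀ v, v ∉ B' → τ v = σ0 v then colMu G L τ / ((fib.card : ℝ) / Nc) else 0) * g τ
        = if τ ∈ fib then g τ / fib.card else 0 := by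
    intro τ
    by_cases hagree : ∀ v, v ∉ B' → τ v = σ0 v
    · rw [if_pos hagree]
      unfold colMu
      by_cases hprop : isListColoring G L τ
      · rw [if_pos hprop, if_pos (by
          rw [hfibdef]
          simp only [Finset.mem_filter, Finset.mem_univ, true_and]
          exact ⟨hprop, hagree⟩)]
        field_simp
        rw [hNcdef]
      · rw [if_neg hprop, if_neg (by
          rw [hfibdef]
          simp only [Finset.mem_filter, Finset.mem_univ, true_and]
          rintro ⟨h, -⟩
          exact hprop h)]
        simp
    · rw [if_neg hagree, if_neg (by
        rw [hfibdef]
        simp only [Finset.mem_filter, Finset.mem_univ, true_and]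
        rintro ⟨-, h⟩
        exact hagree h)]
      simp
  rw [Finset.sum_congr rfl (fun τ _ => hterm τ)]
  rw [Finset.sum_ite_mem, Finset.univ_inter]
  rw [pavg, Finset.sum_div]

lemma pvar_condD {G : SimpleGraph V} {L : V → Finset C}
    (hNc : (Finset.univ.filter (fun τ : V → C => isListColoring G L τ)).Nonempty)
    (B' : Finset V) (σ0 : V → C)
    (hfib : (Finset.univ.filter
      (fun τ : V → C => isListColoring G L τ ∧ ∀ v, v ∉ B' → τ v = σ0 v)).Nonempty)
    (f : (V → C) → ℝ) :
    pvar (condD (colMu G L) B' σ0) f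
      = varOn (Finset.univ.filter
          (fun τ : V → C => isListColoring G L τ ∧ ∀ v, v ∉ B' → τ v = σ0 v)) f := by
  unfold pvar varOn
  rw [pmean_condD hNc B' σ0 hfib f, pmean_condD hNc B' σ0 hfib]


lemma colMu_nonneg (G : SimpleGraph V) (L : V → Finset C) (σ : V → C) : 0 ≤ colMu G L σ := by
  unfold colMu
  apply div_nonneg _ (Nat.cast_nonneg _)
  split <;> norm_num

lemma condD_nonneg {μ : (V → C) → ℝ} (hμ : ∀ τ, 0 ≤ μ τ) (B : Finset V) (σ τ : V → C) :
    0 ≤ condD μ B σ τ := by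
  unfold condD
  split
  · exact div_nonneg (hμ τ) (Finset.sum_nonneg fun τ' _ => hμ τ')
  · exact le_refl 0

lemma pmean_nonneg' {α : Type*} [Fintype α] {p g : α → ℝ} (hp : ∀ a, 0 ≤ p a)
    (hg : ∀ a, 0 ≤ g a) : 0 ≤ pmean p g :=
  Finset.sum_nonneg fun a _ => mul_nonneg (hp a) (hg a)

lemma pvar_nonneg' {α : Type*} [Fintype α] {p : α → ℝ} (hp : ∀ a, 0 ≤ p a) (f : α → ℝ) :
    0 ≤ pvar p f :=
  pmean_nonneg' hp (fun a => sq_nonneg _)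

end ColoringParts

/-- **Block factorization of variance for list colorings.**
If `Δ ≥ 3` bounds the maximum degree, `deg(v) + 2 ≤ |L_v| ≤ q`, `S ⊆ U ⊆ V` with
`|S| ≤ t`, then for any pinning `η` on `V ∖ U`, the conditional distribution `μ^η_U`
satisfies `{B_U(S,1), U∖S}`-factorization of variance with constant `2(2^Δ q)^t`. -/
theorem list_coloring_block_factorization_of_variance
    {V : Type*} [Fintype V] [DecidableEq V] {C : Type*} [Fintype C] [DecidableEq C]
    (G : SimpleGraph V) (L : V → Finset C) (Δ q : ℕ) (hΔ : 3 ≤ Δ)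
    (hdeg : ∀ v, gdeg G v ≤ Δ)
    (hL : ∀ v, gdeg G v + 2 ≤ (L v).card ∧ (L v).card ≤ q)
    (t : ℕ) (ht : 1 ≤ t) (S U : Finset V) (hSU : S ⊆ U) (hS : S.card ≤ t)
    (η : V → C) (hη : ∃ σ : V → C, isListColoring G L σ ∧ ∀ v, v ∉ U → σ v = η v)
    (f : (V → C) → ℝ) :
    pvar (condD (colMu G L) U η) f ≤
      2 * ((2 : ℝ) ^ Δ * q) ^ t *
        (pmean (condD (colMu G L) U η)
            (fun σ => pvar (condD (colMu G L) (ballU1 G U S) σ) f) +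
         pmean (condD (colMu G L) U η)
            (fun σ => pvar (condD (colMu G L) (U \ S) σ) f)) := by
  classical
  obtain ⟨σstar, hσstar⟩ := hη
  have hL2 : ∀ v, gdeg G v + 2 ≤ (L v).card := fun v => (hL v).1
  have hLq : ∀ v, (L v).card ≤ q := fun v => (hL v).2
  have hNc : (Finset.univ.filter (fun τ : V → C => isListColoring G L τ)).Nonempty :=
    ⟨σstar, by simp [hσstar.1]⟩
  by_cases hV : Nonempty V
  case neg =>
    haveI : IsEmpty V := not_nonempty_iff.mp hV
    haveI hsub : Subsingleton (V → C) := ⟨fun a b => funext fun v => isEmptyElim v⟩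
    have huniv : (Finset.univ : Finset (V → C)) = {η} :=
      Finset.eq_singleton_iff_unique_mem.mpr ⟨Finset.mem_univ η, fun τ _ => Subsingleton.elim τ η⟩
    have hcol : ∀ τ : V → C, isListColoring G L τ :=
      fun τ => ⟨fun v => isEmptyElim v, fun u => isEmptyElim u⟩
    have hμη : colMu G L η = 1 := by
      unfold colMu
      rw [if_pos (hcol η), Finset.filter_true_of_mem (fun τ _ => hcol τ), huniv]
      simp
    have hcond : ∀ τ : V → C, (∀ v, v ∉ U → τ v = η v) := fun τ v => isEmptyElim v
    have hpη : condD (colMu G L) U η η = 1 := by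
      unfold condD
      rw [if_pos (hcond η), Finset.filter_true_of_mem (fun τ _ => hcond τ), huniv,
        Finset.sum_singleton, hμη]
      norm_num
    have hpmean : ∀ g : (V → C) → ℝ, pmean (condD (colMu G L) U η) g = g η := by
      intro g
      unfold pmean
      rw [huniv, Finset.sum_singleton, hpη, one_mul]
    have hLHS : pvar (condD (colMu G L) U η) f = 0 := by
      unfold pvar
      rw [hpmean (fun a => (f a - pmean (condD (colMu G L) U η) f) ^ 2), hpmean f]
      simp
    rw [hLHS]
    have h1 : 0 ≤ pmean (condD (colMu G L) U η)
        (fun σ => pvar (condD (colMu G L) (ballU1 G U S) σ) f) :=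
      pmean_nonneg' (condD_nonneg (colMu_nonneg G L) U η)
        (fun σ => pvar_nonneg' (condD_nonneg (colMu_nonneg G L) _ σ) f)
    have h2 : 0 ≤ pmean (condD (colMu G L) U η)
        (fun σ => pvar (condD (colMu G L) (U \ S) σ) f) :=
      pmean_nonneg' (condD_nonneg (colMu_nonneg G L) U η)
        (fun σ => pvar_nonneg' (condD_nonneg (colMu_nonneg G L) _ σ) f)
    have hKnn : (0:ℝ) ≤ 2 * ((2:ℝ)^Δ * q)^t := by positivity
    exact mul_nonneg hKnn (add_nonneg h1 h2)
  case pos =>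
    obtain ⟨v0⟩ := hV
    have hq1 : 1 ≤ q := by
      have h1 := (hL v0).1
      have h2 := (hL v0).2
      omega
    set B := ballU1 G U S with hB
    set T := U \ S with hT
    have hBU : B ⊆ U := Finset.filter_subset _ _
    have hTU : T ⊆ U := Finset.sdiff_subset
    have hSB : S ⊆ B := by
      intro s hs
      rw [hB]
      simp only [ballU1, Finset.mem_filter]
      exact ⟨hSU hs, ⟨s, hs, SimpleGraph.Walk.nil, by simp⟩⟩
    have hadjB : ∀ z s, s ∈ S → G.Adj z s → z ∈ U → z ∈ B := by
      intro z s hs hadj hz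
      rw [hB]
      simp only [ballU1, Finset.mem_filter]
      exact ⟨hz, ⟨s, hs, SimpleGraph.Walk.cons hadj SimpleGraph.Walk.nil, by simp⟩⟩
    set ΩU := Finset.univ.filter
      (fun τ : V → C => isListColoring G L τ ∧ ∀ v, v ∉ U → τ v = η v) with hΩU
    have hmemΩ : ∀ ρ : V → C, ρ ∈ ΩU ↔ isListColoring G L ρ ∧ ∀ v, v ∉ U → ρ v = η v := by
      intro ρ
      rw [hΩU]
      simp
    have hΩne : ΩU.Nonempty := ⟨σstar, (hmemΩ σstar).mpr ⟨hσstar.1, hσstar.2⟩⟩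
    set πW : (V → C) → (V → C) := fun τ v => if v ∈ B then η v else τ v with hπWdef
    set πS : (V → C) → (V → C) := fun τ v => if v ∈ T then η v else τ v with hπSdef
    have hπW : ∀ σ τ : V → C, πW τ = πW σ ↔ ∀ v, v ∉ B → τ v = σ v := by
      intro σ τ
      constructor
      · intro h v hv
        have := congrFun h v
        simpa [hπWdef, hv] using this
      · intro h
        funext v
        by_cases hv : v ∈ B
        · simp [hπWdef, hv]
        · simp [hπWdef, hv, h v hv]
    have hπS : ∀ σ τ : V → C, πS τ = πS σ ↔ ∀ v, v ∉ T → τ v = σ v := by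
      intro σ τ
      constructor
      · intro h v hv
        have := congrFun h v
        simpa [hπSdef, hv] using this
      · intro h
        funext v
        by_cases hv : v ∈ T
        · simp [hπSdef, hv]
        · simp [hπSdef, hv, h v hv]
    have hfibWid : ∀ σ ∈ ΩU,
        Finset.univ.filter (fun τ : V → C => isListColoring G L τ ∧ ∀ v, v ∉ B → τ v = σ v)
          = ΩU.filter (fun τ => πW τ = πW σ) := by
      intro σ hσ
      have hσ2 := (hmemΩ σ).mp hσ
      ext τ
      simp only [Finset.mem_filter, Finset.mem_univ, true_and, hmemΩ, hπW]
      constructor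
      · rintro ⟨hp, hoff⟩
        exact ⟨⟨hp, fun v hv => by
          rw [hoff v (fun hBv => hv (hBU hBv))]
          exact hσ2.2 v hv⟩, hoff⟩
      · rintro ⟨⟨hp, _⟩, hoff⟩
        exact ⟨hp, hoff⟩
    have hfibSid : ∀ σ ∈ ΩU,
        Finset.univ.filter (fun τ : V → C => isListColoring G L τ ∧ ∀ v, v ∉ T → τ v = σ v)
          = ΩU.filter (fun τ => πS τ = πS σ) := by
      intro σ hσ
      have hσ2 := (hmemΩ σ).mp hσ
      ext τ
      simp only [Finset.mem_filter, Finset.mem_univ, true_and, hmemΩ, hπS]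
      constructor
      · rintro ⟨hp, hoff⟩
        exact ⟨⟨hp, fun v hv => by
          rw [hoff v (fun hTv => hv (hTU hTv))]
          exact hσ2.2 v hv⟩, hoff⟩
      · rintro ⟨⟨hp, _⟩, hoff⟩
        exact ⟨hp, hoff⟩
    have hfibWne : ∀ σ ∈ ΩU, (Finset.univ.filter
        (fun τ : V → C => isListColoring G L τ ∧ ∀ v, v ∉ B → τ v = σ v)).Nonempty := by
      intro σ hσ
      exact ⟨σ, by simp [((hmemΩ σ).mp hσ).1]⟩
    have hfibSne : ∀ σ ∈ ΩU, (Finset.univ.filter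
        (fun τ : V → C => isListColoring G L τ ∧ ∀ v, v ∉ T → τ v = σ v)).Nonempty := by
      intro σ hσ
      exact ⟨σ, by simp [((hmemΩ σ).mp hσ).1]⟩
    have hKnat1 : 1 ≤ 2^Δ * q := by
      have h2 : 0 < 2^Δ := by positivity
      have : 0 < 2^Δ * q := Nat.mul_pos h2 (by omega)
      omega
    have hK1 : (1:ℝ) ≤ ((2:ℝ)^Δ * q)^t := by
      have hbase : (1:ℝ) ≤ (2:ℝ)^Δ * q := by exact_mod_cast hKnat1
      calc (1:ℝ) = 1^t := (one_pow t).symm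
        _ ≤ ((2:ℝ)^Δ * q)^t := pow_le_pow_left₀ (by norm_num) hbase t
    have hD : ∀ σ ∈ ΩU, ∀ τ ∈ ΩU, ((ΩU.filter fun ρ => πW ρ = πW τ).card : ℝ)
        ≤ ((2:ℝ)^Δ * q)^t * ((ΩU.filter fun ρ => πS ρ = πS σ ∧ πW ρ = πW τ).card) := by
      intro σ hσ τ hτ
      have hσ2 := (hmemΩ σ).mp hσ
      have hτ2 := (hmemΩ τ).mp hτ
      set ξ : V → C := fun v => if v ∈ S then σ v else τ v with hξ
      have hξS : ∀ v ∈ S, ξ v = σ v := fun v hv => by simp only [hξ, if_pos hv]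
      have hξnS : ∀ v, v ∉ S → ξ v = τ v := fun v hv => by simp only [hξ, if_neg hv]
      have hC1 : ΩU.filter (fun ρ => πW ρ = πW τ) = Ecol G L Bᶜ ξ := by
        ext ρ
        simp only [Finset.mem_filter, hmemΩ, hπW, mem_Ecol, Finset.mem_compl]
        constructor
        · rintro ⟨⟨hp, hoffU⟩, hoffB⟩
          refine ⟨hp, fun u hu => ?_⟩
          rw [hoffB u hu, hξnS u (fun hS' => hu (hSB hS'))]
        · rintro ⟨hp, hoff⟩
          have hoffB : ∀ v, v ∉ B → ρ v = τ v := by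
            intro v hv
            rw [hoff v hv, hξnS v (fun hS' => hv (hSB hS'))]
          exact ⟨⟨hp, fun v hv => by
            rw [hoffB v (fun hBv => hv (hBU hBv))]
            exact hτ2.2 v hv⟩, hoffB⟩
      have hC2 : ΩU.filter (fun ρ => πS ρ = πS σ ∧ πW ρ = πW τ) = Ecol G L (Bᶜ ∪ S) ξ := by
        ext ρ
        simp only [Finset.mem_filter, hmemΩ, hπW, hπS, mem_Ecol, Finset.mem_compl,
          Finset.mem_union]
        constructor
        · rintro ⟨⟨hp, hoffU⟩, hoffT, hoffB⟩
          refine ⟨hp, fun u hu => ?_⟩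
          rcases hu with hu | hu
          · rw [hoffB u hu, hξnS u (fun hS' => hu (hSB hS'))]
          · have huT : u ∉ T := by
              rw [hT]
              simp [hu]
            rw [hoffT u huT, hξS u hu]
        · rintro ⟨hp, hoff⟩
          have hoffB : ∀ v, v ∉ B → ρ v = τ v := by
            intro v hv
            rw [hoff v (Or.inl hv), hξnS v (fun hS' => hv (hSB hS'))]
          have hoffU : ∀ v, v ∉ U → ρ v = η v := fun v hv => by
            rw [hoffB v (fun hBv => hv (hBU hBv))]
            exact hτ2.2 v hv
          refine ⟨⟨hp, hoffU⟩, ?_, hoffB⟩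
          intro v hv
          by_cases hvS : v ∈ S
          · rw [hoff v (Or.inr hvS), hξS v hvS]
          · have hvU : v ∉ U := by
              intro hvU
              exact hv (by rw [hT]; exact Finset.mem_sdiff.mpr ⟨hvU, hvS⟩)
            rw [hoffU v hvU]
            exact (hσ2.2 v hvU).symm
      have hξmem : ∀ u ∈ (Bᶜ ∪ S : Finset V), ξ u ∈ L u := by
        intro u hu
        by_cases huS : u ∈ S
        · rw [hξS u huS]; exact hσ2.1.1 u
        · rw [hξnS u huS]; exact hτ2.1.1 u
      have hξprop : ∀ a ∈ (Bᶜ ∪ S : Finset V), ∀ b ∈ (Bᶜ ∪ S : Finset V),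
          G.Adj a b → ξ a ≠ ξ b := by
        intro a ha b hb hab
        by_cases haS : a ∈ S <;> by_cases hbS : b ∈ S
        · rw [hξS a haS, hξS b hbS]; exact hσ2.1.2 a b hab
        · rw [hξS a haS, hξnS b hbS]
          have hbB : b ∉ B := by
            rcases Finset.mem_union.mp hb with h | h
            · exact Finset.mem_compl.mp h
            · exact absurd h hbS
          have hbU : b ∉ U := fun hbU => hbB (hadjB b a haS hab.symm hbU)
          rw [show τ b = σ b from (hτ2.2 b hbU).trans (hσ2.2 b hbU).symm]
          exact hσ2.1.2 a b hab
        · rw [hξnS a haS, hξS b hbS]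
          have haB : a ∉ B := by
            rcases Finset.mem_union.mp ha with h | h
            · exact Finset.mem_compl.mp h
            · exact absurd h haS
          have haU : a ∉ U := fun haU => haB (hadjB a b hbS hab haU)
          rw [show τ a = σ a from (hτ2.2 a haU).trans (hσ2.2 a haU).symm]
          exact hσ2.1.2 a b hab
        · rw [hξnS a haS, hξnS b hbS]; exact hτ2.1.2 a b hab
      have hne2 : (Ecol G L (Bᶜ ∪ S) ξ).Nonempty := extend_greedy hL2 _ ξ hξmem hξprop
      have hdisj : Disjoint (Bᶜ : Finset V) S :=
        Finset.disjoint_left.mpr (fun v hv hvS => (Finset.mem_compl.mp hv) (hSB hvS))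
      have hcount := inj_tele hdeg hL2 hLq S Bᶜ ξ hdisj hne2
      have hcount2 : (Ecol G L Bᶜ ξ).card ≤ (2^Δ * q)^t * (Ecol G L (Bᶜ ∪ S) ξ).card := by
        refine le_trans hcount (Nat.mul_le_mul_right _ ?_)
        exact Nat.pow_le_pow_right hKnat1 hS
      rw [hC1, hC2]
      calc ((Ecol G L Bᶜ ξ).card : ℝ)
          ≤ (((2^Δ * q)^t * (Ecol G L (Bᶜ ∪ S) ξ).card : ℕ) : ℝ) := by exact_mod_cast hcount2
        _ = ((2:ℝ)^Δ * q)^t * ((Ecol G L (Bᶜ ∪ S) ξ).card : ℝ) := by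
            push_cast
            ring
    have hLHSeq : pvar (condD (colMu G L) U η) f = varOn ΩU f := by
      have := pvar_condD hNc U η hΩne f
      rw [this, ← hΩU]
    have hRW : pmean (condD (colMu G L) U η)
        (fun σ => pvar (condD (colMu G L) B σ) f)
        = pavg ΩU (fun σ => varOn (ΩU.filter (fun ρ => πW ρ = πW σ)) f) := by
      rw [pmean_condD hNc U η hΩne, ← hΩU]
      apply pavg_congr
      intro σ hσ
      rw [pvar_condD hNc B σ (hfibWne σ hσ), hfibWid σ hσ]
    have hRS : pmean (condD (colMu G L) U η)
        (fun σ => pvar (condD (colMu G L) T σ) f)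
        = pavg ΩU (fun σ => varOn (ΩU.filter (fun ρ => πS ρ = πS σ)) f) := by
      rw [pmean_condD hNc U η hΩne, ← hΩU]
      apply pavg_congr
      intro σ hσ
      rw [pvar_condD hNc T σ (hfibSne σ hσ), hfibSid σ hσ]
    rw [hLHSeq, hRW, hRS]
    have htb := two_block ΩU hΩne πW πS (((2:ℝ)^Δ * q)^t) hK1 hD f
    have hx : 0 ≤ pavg ΩU (fun σ => varOn (ΩU.filter fun ρ => πW ρ = πW σ) f) :=
      pavg_nonneg (fun σ _ => varOn_nonneg _ _)
    have hy : 0 ≤ pavg ΩU (fun σ => varOn (ΩU.filter fun ρ => πS ρ = πS σ) f) :=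
      pavg_nonneg (fun σ _ => varOn_nonneg _ _)
    calc varOn ΩU f
        ≤ ((2:ℝ)^Δ * q)^t * (pavg ΩU (fun σ => varOn (ΩU.filter fun ρ => πW ρ = πW σ) f)
          + pavg ΩU (fun σ => varOn (ΩU.filter fun ρ => πS ρ = πS σ) f)) := htb
      _ ≤ 2 * ((2:ℝ)^Δ * q)^t * (pavg ΩU (fun σ => varOn (ΩU.filter fun ρ => πW ρ = πW σ) f)
          + pavg ΩU (fun σ => varOn (ΩU.filter fun ρ => πS ρ = πS σ) f)) := by
            nlinarith [hK1, hx, hy]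


end
end
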